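/- Let d ≥ 2 and q₁,…,q_d ≥ 2 be integers. The closure in ℝ of the union over all n ≥ 2 of the sets of eigenvalues of the real symmetric matrices Q_n equals the range {Q̂(t) : t ∈ ℝ^d} of Q̂. -/

import Mathlib

open Finset Real

/-- `Q̂(t) = (1/D)·Σ_{i≠j} √(q_i q_j)·cos(t_i − t_j)`, where `D = (d−1)(q₁+⋯+q_d)`. -/
noncomputable def Qhat (d : ℕ) (q : Fin d → ℕ) (t : Fin d → ℝ) : ℝ :=
  (1 / (((d : ℝ) - 1) * ∑ j, (q j : ℝ))) *
    ∑ p ∈ Finset.univ.offDiag,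
      Real.sqrt ((q p.1 : ℝ) * (q p.2 : ℝ)) * Real.cos (t p.1 - t p.2)

/-- The finite set `B_n° = {k ∈ ℤ^d : Σk = 0, k_i ≥ 1 for i ≤ d−1, k_d ≥ 1−n}`. -/
def BnInt (d n : ℕ) : Set (Fin d → ℤ) :=
  {k | (∑ i, k i = 0) ∧ ∀ i : Fin d,
    ((i : ℕ) < d - 1 → 1 ≤ k i) ∧ ((i : ℕ) = d - 1 → 1 - (n : ℤ) ≤ k i)}

/-- `lam` is an eigenvalue of the symmetric matrix `Q_n` indexed by `B_n°`, whose
`(k, l)` entry is `√(q_i q_j)/D` if `l = k + e_i − e_j` (`i ≠ j`) and `0` otherwise. -/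
def IsEigenvalueQn (d : ℕ) (q : Fin d → ℕ) (n : ℕ) (lam : ℝ) : Prop :=
  ∃ f : (Fin d → ℤ) → ℝ, f ≠ 0 ∧ (∀ k ∉ BnInt d n, f k = 0) ∧
    ∀ k ∈ BnInt d n,
      (1 / (((d : ℝ) - 1) * ∑ j, (q j : ℝ))) *
        ∑ p ∈ Finset.univ.offDiag,
          Real.sqrt ((q p.1 : ℝ) * (q p.2 : ℝ)) * f (k + Pi.single p.1 1 - Pi.single p.2 1)
      = lam * f k

namespace St14

variable {d D : ℕ}


noncomputable def Dq (d : ℕ) (q : Fin d → ℕ) : ℝ := ((d:ℝ) - 1) * ∑ j, (q j : ℝ)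

noncomputable def cq (q : Fin d → ℕ) (p : Fin d × Fin d) : ℝ :=
  Real.sqrt ((q p.1 : ℝ) * (q p.2 : ℝ))

lemma cq_nonneg (q : Fin d → ℕ) (p : Fin d × Fin d) : 0 ≤ cq q p := Real.sqrt_nonneg _

lemma cq_swap (q : Fin d → ℕ) (p : Fin d × Fin d) : cq q p.swap = cq q p := by
  simp [cq, mul_comm]

lemma Dq_pos (hd : 2 ≤ d) (q : Fin d → ℕ) (hq : ∀ j, 2 ≤ q j) : 0 < Dq d q := by
  have h1 : (2:ℝ) ≤ (d:ℝ) := by exact_mod_cast hd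
  have h2 : 0 < ∑ j, (q j : ℝ) := by
    apply Finset.sum_pos (fun j _ => by have := hq j; positivity)
    exact univ_nonempty_iff.mpr ⟨⟨0, by omega⟩⟩
  exact mul_pos (by linarith) h2

lemma sum_offDiag_swap {M : Type*} [AddCommMonoid M] (g : Fin d × Fin d → M) :
    ∑ p ∈ Finset.univ.offDiag, g p.swap = ∑ p ∈ Finset.univ.offDiag, g p := by
  apply Finset.sum_equiv (Equiv.prodComm (Fin d) (Fin d))
  · intro p; simp [Finset.mem_offDiag, ne_comm, eq_comm]
  · intro p _; rfl

lemma sum_fst_offDiag (g : Fin d → ℝ) :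
    ∑ p ∈ Finset.univ.offDiag, g p.1 = ((d:ℝ) - 1) * ∑ j, g j := by
  classical
  have h : Finset.univ.offDiag
      = (Finset.univ ×ˢ Finset.univ).filter (fun p : Fin d × Fin d => p.1 ≠ p.2) := by
    ext p; simp [Finset.mem_offDiag]
  rw [h, Finset.sum_filter, Finset.sum_product]
  have h2 : ∀ i : Fin d, (∑ j : Fin d, if i ≠ j then g i else 0) = ((d:ℝ) - 1) * g i := by
    intro i
    have h3 : (∑ j : Fin d, if i ≠ j then g i else 0)
        = ∑ j : Fin d, (g i - if i = j then g i else 0) := by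
      apply Finset.sum_congr rfl; intro j _; by_cases hij : i = j <;> simp [hij]
    rw [h3, Finset.sum_sub_distrib, Finset.sum_ite_eq, Finset.sum_const]
    simp [Finset.card_univ]
    ring
  rw [Finset.sum_congr rfl (fun i _ => h2 i), ← Finset.mul_sum]

lemma sum_snd_offDiag (g : Fin d → ℝ) :
    ∑ p ∈ Finset.univ.offDiag, g p.2 = ((d:ℝ) - 1) * ∑ j, g j := by
  rw [← sum_offDiag_swap (fun p => g p.2)]
  exact sum_fst_offDiag g

lemma sum_cq_le (q : Fin d → ℕ) :
    ∑ p ∈ Finset.univ.offDiag, cq q p ≤ Dq d q := by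
  have h1 : ∀ p : Fin d × Fin d, cq q p ≤ ((q p.1 : ℝ) + q p.2)/2 := by
    intro p
    have ha : (0:ℝ) ≤ (q p.1 : ℝ) := Nat.cast_nonneg _
    have hb : (0:ℝ) ≤ (q p.2 : ℝ) := Nat.cast_nonneg _
    rw [cq]
    calc Real.sqrt ((q p.1 : ℝ) * q p.2) ≤ Real.sqrt ((((q p.1 : ℝ) + q p.2)/2)^2) := by
          apply Real.sqrt_le_sqrt; nlinarith [sq_nonneg ((q p.1:ℝ) - q p.2)]
      _ = ((q p.1 : ℝ) + q p.2)/2 := Real.sqrt_sq (by positivity)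
  calc ∑ p ∈ Finset.univ.offDiag, cq q p
      ≤ ∑ p ∈ Finset.univ.offDiag, (((q p.1 : ℝ) + q p.2)/2) :=
        Finset.sum_le_sum (fun p _ => h1 p)
    _ = Dq d q := by
        have : ∀ p : Fin d × Fin d, (((q p.1 : ℝ) + q p.2)/2)
            = (fun p : Fin d × Fin d => (q p.1 : ℝ)/2) p + (fun p : Fin d × Fin d => (q p.2 : ℝ)/2) p := by
          intro p; ring
        rw [Finset.sum_congr rfl (fun p _ => this p), Finset.sum_add_distrib,
          sum_fst_offDiag (fun i => (q i : ℝ)/2), sum_snd_offDiag (fun i => (q i : ℝ)/2),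
          ← Finset.sum_div, Dq]
        ring


lemma sum_cq_sin (q : Fin d → ℕ) (t : Fin d → ℝ) :
    ∑ p ∈ Finset.univ.offDiag, cq q p * Real.sin (t p.1 - t p.2) = 0 := by
  have h := sum_offDiag_swap (fun p : Fin d × Fin d => cq q p * Real.sin (t p.1 - t p.2))
  have h2 : ∀ p : Fin d × Fin d,
      cq q p.swap * Real.sin (t p.swap.1 - t p.swap.2) = -(cq q p * Real.sin (t p.1 - t p.2)) := by
    intro p
    rw [cq_swap, Prod.fst_swap, Prod.snd_swap,
      show t p.2 - t p.1 = -(t p.1 - t p.2) by ring, Real.sin_neg]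
    ring
  rw [Finset.sum_congr rfl (fun p _ => h2 p), Finset.sum_neg_distrib] at h
  linarith

lemma sum_cq_exp (q : Fin d → ℕ) (t : Fin d → ℝ) :
    ∑ p ∈ Finset.univ.offDiag, (cq q p : ℂ) * Complex.exp (((t p.1 - t p.2 : ℝ) : ℂ) * Complex.I)
    = ((∑ p ∈ Finset.univ.offDiag, cq q p * Real.cos (t p.1 - t p.2) : ℝ) : ℂ) := by
  have h : ∀ p ∈ Finset.univ.offDiag, (cq q p : ℂ) * Complex.exp (((t p.1 - t p.2 : ℝ):ℂ) * Complex.I)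
      = ((cq q p * Real.cos (t p.1 - t p.2) : ℝ) : ℂ)
        + ((cq q p * Real.sin (t p.1 - t p.2) : ℝ) : ℂ) * Complex.I := by
    intro p _
    rw [Complex.exp_mul_I, ← Complex.ofReal_cos, ← Complex.ofReal_sin]
    push_cast
    ring
  rw [Finset.sum_congr rfl h, Finset.sum_add_distrib, ← Finset.sum_mul,
    ← Complex.ofReal_sum, ← Complex.ofReal_sum, sum_cq_sin]
  simp


variable {e : ℕ}


/-- extend a vector by the negative of its sum, to make a sum-zero vector -/
def ext (x : Fin e → ℤ) : Fin (e+1) → ℤ := Fin.snoc x (-∑ j, x j)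

@[simp] lemma ext_castSucc (x : Fin e → ℤ) (j : Fin e) : ext x (Fin.castSucc j) = x j :=
  Fin.snoc_castSucc _ _ _

@[simp] lemma ext_last (x : Fin e → ℤ) : ext x (Fin.last e) = -∑ j, x j :=
  Fin.snoc_last _ _

lemma sum_ext (x : Fin e → ℤ) : ∑ i, ext x i = 0 := by
  rw [Fin.sum_univ_castSucc]
  simp

lemma ext_proj {k : Fin (e+1) → ℤ} (hk : ∑ i, k i = 0) :
    ext (fun j => k (Fin.castSucc j)) = k := by
  funext i
  refine Fin.lastCases ?_ ?_ i
  · rw [ext_last]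
    rw [Fin.sum_univ_castSucc] at hk
    linarith
  · intro j; simp

lemma ext_injective : Function.Injective (ext (e := e)) := by
  intro x y h
  funext j
  have := congrFun h (Fin.castSucc j)
  simpa using this

/-- the embedding version -/
def extEmb : (Fin e → ℤ) ↪ (Fin (e+1) → ℤ) := ⟨ext, ext_injective⟩

/-- The finset version of `BnInt`. -/
noncomputable def Bfin (e n : ℕ) : Finset (Fin (e+1) → ℤ) :=
  (Fintype.piFinset fun _ => Finset.Icc (-(n:ℤ)) n).filter
    (fun k => (∑ i, k i = 0) ∧ ∀ i : Fin (e+1),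
      ((i:ℕ) < e → 1 ≤ k i) ∧ ((i:ℕ) = e → 1 - (n:ℤ) ≤ k i))

lemma bnint_bounds {n : ℕ} {k : Fin (e+1) → ℤ} (hk : k ∈ BnInt (e+1) n) (i : Fin (e+1)) :
    -(n:ℤ) ≤ k i ∧ k i ≤ n := by
  obtain ⟨hsum, hlo⟩ := hk
  simp only [Nat.add_sub_cancel] at hlo
  set lo : Fin (e+1) → ℤ := fun j => if (j:ℕ) = e then 1 - n else 1 with hloDef
  have hlok : ∀ j, lo j ≤ k j := by
    intro j
    by_cases hj : (j:ℕ) = e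
    · simpa [hloDef, hj] using (hlo j).2 hj
    · have hj' : (j:ℕ) < e := by omega
      simpa [hloDef, hj] using (hlo j).1 hj'
  constructor
  · calc -(n:ℤ) ≤ lo i := by by_cases hi : (i:ℕ) = e <;> simp [hloDef, hi] <;> omega
      _ ≤ k i := hlok i
  · -- k i = -∑_{j ≠ i} k j ≤ -∑_{j ≠ i} lo j
    have hsplit : k i + ∑ j ∈ Finset.univ.erase i, k j = 0 := by
      rw [Finset.add_sum_erase _ _ (Finset.mem_univ i)]; exact hsum
    have hsumlo : ∑ j ∈ Finset.univ.erase i, lo j ≤ ∑ j ∈ Finset.univ.erase i, k j :=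
      Finset.sum_le_sum (fun j _ => hlok j)
    have hcard : (Finset.univ.erase i).card = e := by
      rw [Finset.card_erase_of_mem (Finset.mem_univ i)]
      simp
    have hlosum : ∑ j ∈ Finset.univ.erase i, lo j
        = e - (if (Fin.last e) ∈ Finset.univ.erase i then (n:ℤ) else 0) := by
      have : ∀ j, lo j = 1 - (if j = Fin.last e then (n:ℤ) else 0) := by
        intro j
        by_cases hj : (j:ℕ) = e
        · have : j = Fin.last e := by ext; simpa using hj
          simp [hloDef, this]
        · have : j ≠ Fin.last e := by simp [Fin.ext_iff]; omega
          simp [hloDef, hj, this]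
      rw [Finset.sum_congr rfl (fun j _ => this j), Finset.sum_sub_distrib,
        Finset.sum_ite_eq' (Finset.univ.erase i) (Fin.last e) (fun _ => (n:ℤ))]
      rw [Finset.sum_const, hcard]
      simp
  -- now case split
    by_cases hi : i = Fin.last e
    · have : (Fin.last e) ∉ Finset.univ.erase i := by simp [hi]
      rw [if_neg this] at hlosum
      have : (e:ℤ) ≤ ∑ j ∈ Finset.univ.erase i, k j := by omega
      omega
    · have : (Fin.last e) ∈ Finset.univ.erase i := by simp [Ne.symm hi]
      rw [if_pos this] at hlosum
      have : (e:ℤ) - n ≤ ∑ j ∈ Finset.univ.erase i, k j := by omega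
      omega

lemma mem_Bfin {n : ℕ} {k : Fin (e+1) → ℤ} : k ∈ Bfin e n ↔ k ∈ BnInt (e+1) n := by
  constructor
  · rintro hk
    rw [Bfin, Finset.mem_filter] at hk
    refine ⟨hk.2.1, ?_⟩
    intro i
    simpa [Nat.add_sub_cancel] using hk.2.2 i
  · intro hk
    rw [Bfin, Finset.mem_filter]
    have hb := fun i => bnint_bounds hk i
    refine ⟨?_, hk.1, ?_⟩
    · rw [Fintype.mem_piFinset]
      intro i
      rw [Finset.mem_Icc]
      exact hb i
    · intro i
      have := hk.2 i
      simpa [Nat.add_sub_cancel] using this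

lemma coe_Bfin (e n : ℕ) : (Bfin e n : Set (Fin (e+1) → ℤ)) = BnInt (e+1) n := by
  ext k; simpa using mem_Bfin


lemma norm_sq_eucl {I : Type*} [Fintype I] (y : EuclideanSpace ℂ I) :
    ‖y‖^2 = ∑ i, Complex.normSq (y i) := by
  rw [EuclideanSpace.norm_eq, Real.sq_sqrt (by positivity)]
  congr 1; funext i
  rw [Complex.sq_norm]

lemma approx_eigen {I : Type*} [Fintype I] [DecidableEq I] {M : Matrix I I ℂ}
    (hM : M.IsHermitian) {v : I → ℂ} (hv : v ≠ 0) {μ ε : ℝ}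
    (hres : ∑ i, Complex.normSq (M.mulVec v i - (μ:ℂ) * v i)
      ≤ ε^2 * ∑ i, Complex.normSq (v i)) :
    ∃ i, (hM.eigenvalues i - μ)^2 ≤ ε^2 := by
  classical
  set b := hM.eigenvectorBasis with hb
  set w : EuclideanSpace ℂ I := WithLp.toLp 2 v with hw
  set T := Matrix.toEuclideanLin M with hT
  have hsym : T.IsSymmetric := (Matrix.isHermitian_iff_isSymmetric.1 hM)
  have hTapp : ∀ x : EuclideanSpace ℂ I, ∀ i, T x i = M.mulVec x i := by
    intro x i
    simp [hT, Matrix.toEuclideanLin_apply]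
  have hTb : ∀ i, T (b i) = (hM.eigenvalues i : ℂ) • b i := by
    intro i
    apply PiLp.ext
    intro j
    rw [hTapp]
    have h := congrFun (hM.mulVec_eigenvectorBasis i) j
    simpa [hb, Complex.real_smul] using h
  set r : EuclideanSpace ℂ I := T w - (μ:ℂ) • w with hr
  have hrapp : ∀ i, r i = M.mulVec v i - (μ:ℂ) * v i := by
    intro i
    have : r i = T w i - ((μ:ℂ) • w) i := rfl
    rw [this, hTapp]
    rfl
  set c : I → ℂ := fun i => b.repr w i with hc
  have hreprr : ∀ i, b.repr r i = ((hM.eigenvalues i : ℂ) - μ) * c i := by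
    intro i
    have hci : c i = inner ℂ (b i) w := b.repr_apply_apply w i
    rw [b.repr_apply_apply, hr, inner_sub_right, inner_smul_right,
      ← hsym (b i) w, hTb i, inner_smul_left, hci, Complex.conj_ofReal]
    ring
  have hnr : ‖r‖^2 = ∑ i, (hM.eigenvalues i - μ)^2 * Complex.normSq (c i) := by
    rw [← b.repr.norm_map r, norm_sq_eucl]
    apply Finset.sum_congr rfl
    intro i _
    rw [hreprr]
    rw [Complex.normSq_mul]
    have : Complex.normSq ((hM.eigenvalues i : ℂ) - (μ:ℂ)) = (hM.eigenvalues i - μ)^2 := by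
      rw [← Complex.ofReal_sub, Complex.normSq_ofReal]; ring
    rw [this]
  have hnw : ‖w‖^2 = ∑ i, Complex.normSq (c i) := by
    rw [← b.repr.norm_map w, norm_sq_eucl]
  have hineq : ∑ i, (hM.eigenvalues i - μ)^2 * Complex.normSq (c i)
      ≤ ε^2 * ∑ i, Complex.normSq (c i) := by
    rw [← hnr, ← hnw]
    rw [norm_sq_eucl r]
    calc ∑ i, Complex.normSq (r i) = ∑ i, Complex.normSq (M.mulVec v i - (μ:ℂ) * v i) := by
          apply Finset.sum_congr rfl; intro i _; rw [hrapp]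
      _ ≤ ε^2 * ∑ i, Complex.normSq (v i) := hres
      _ = ε^2 * ‖w‖^2 := by rw [norm_sq_eucl w]
  by_contra hcon
  push_neg at hcon
  have hex : ∃ i, c i ≠ 0 := by
    by_contra hc0
    push_neg at hc0
    apply hv
    have : b.repr w = 0 := by
      apply PiLp.ext; intro i; exact hc0 i
    have := b.repr.map_eq_zero_iff.mp this
    exact congrArg WithLp.ofLp this
  obtain ⟨i0, hi0⟩ := hex
  have hstrict : ε^2 * ∑ i, Complex.normSq (c i)
      < ∑ i, (hM.eigenvalues i - μ)^2 * Complex.normSq (c i) := by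
    rw [Finset.mul_sum]
    apply Finset.sum_lt_sum
    · intro i _
      have h1 : ε^2 ≤ (hM.eigenvalues i - μ)^2 := le_of_lt (hcon i)
      have h2 : 0 ≤ Complex.normSq (c i) := Complex.normSq_nonneg _
      nlinarith
    · refine ⟨i0, Finset.mem_univ _, ?_⟩
      have h1 : ε^2 < (hM.eigenvalues i0 - μ)^2 := hcon i0
      have h2 : 0 < Complex.normSq (c i0) := Complex.normSq_pos.mpr hi0
      nlinarith
  linarith


/-- the step vector `e_i - e_j` -/
def δp (p : Fin d × Fin d) : Fin d → ℤ := Pi.single p.1 1 - Pi.single p.2 1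

lemma δp_swap (p : Fin d × Fin d) : δp p.swap = -δp p := by
  simp [δp]

/-- The truncated matrix, with complex entries. -/
noncomputable def AC (q : Fin d → ℕ) (B : Finset (Fin d → ℤ)) : Matrix B B ℂ :=
  fun k l => ((1 / Dq d q : ℝ) : ℂ) *
    ∑ p ∈ Finset.univ.offDiag, (cq q p : ℂ) * (if (l : Fin d → ℤ) = ↑k + δp p then 1 else 0)

/-- extension by zero -/
def gext (B : Finset (Fin d → ℤ)) (g : ↥B → ℂ) : (Fin d → ℤ) → ℂ :=
  fun x => if h : x ∈ B then g ⟨x, h⟩ else 0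

lemma gext_coe (B : Finset (Fin d → ℤ)) (g : ↥B → ℂ) (k : ↥B) : gext B g ↑k = g k := by
  simp [gext]

lemma sum_ite_gext (B : Finset (Fin d → ℤ)) (g : ↥B → ℂ) (x : Fin d → ℤ) :
    ∑ l : ↥B, (if (l : Fin d → ℤ) = x then 1 else 0) * g l = gext B g x := by
  classical
  by_cases hx : x ∈ B
  · rw [gext, dif_pos hx]
    rw [Finset.sum_eq_single (⟨x, hx⟩ : ↥B)]
    · simp
    · intro l _ hl
      have : (l : Fin d → ℤ) ≠ x := by
        intro h; apply hl; exact Subtype.ext h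
      simp [this]
    · intro h; exact absurd (Finset.mem_univ _) h
  · rw [gext, dif_neg hx]
    apply Finset.sum_eq_zero
    intro l _
    have : (l : Fin d → ℤ) ≠ x := by
      intro h; apply hx; rw [← h]; exact l.2
    simp [this]

lemma AC_mulVec (q : Fin d → ℕ) (B : Finset (Fin d → ℤ)) (g : ↥B → ℂ) (k : ↥B) :
    (AC q B).mulVec g k
      = ((1 / Dq d q : ℝ) : ℂ) * ∑ p ∈ Finset.univ.offDiag, (cq q p : ℂ) * gext B g (↑k + δp p) := by
  classical
  rw [Matrix.mulVec]
  show ∑ l : ↥B, AC q B k l * g l = _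
  have h1 : ∀ l : ↥B, AC q B k l * g l
      = ((1 / Dq d q : ℝ) : ℂ) * ∑ p ∈ Finset.univ.offDiag,
          (cq q p : ℂ) * ((if (l : Fin d → ℤ) = ↑k + δp p then 1 else 0) * g l) := by
    intro l
    rw [AC, mul_assoc, Finset.sum_mul]
    congr 1
    apply Finset.sum_congr rfl
    intro p _
    ring
  rw [Finset.sum_congr rfl (fun l _ => h1 l), ← Finset.mul_sum]
  congr 1
  rw [Finset.sum_comm]
  apply Finset.sum_congr rfl
  intro p _
  rw [← Finset.mul_sum, sum_ite_gext]

lemma AC_herm (q : Fin d → ℕ) (B : Finset (Fin d → ℤ)) : (AC q B).IsHermitian := by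
  classical
  rw [Matrix.IsHermitian]
  ext k l
  rw [Matrix.conjTranspose_apply]
  have hsymm : AC q B l k = AC q B k l := by
    rw [AC, AC]
    congr 1
    rw [← sum_offDiag_swap (fun p => (cq q p : ℂ) * (if (k : Fin d → ℤ) = ↑l + δp p then 1 else 0))]
    apply Finset.sum_congr rfl
    intro p _
    rw [cq_swap, δp_swap]
    congr 1
    have : ((k : Fin d → ℤ) = ↑l + -δp p) ↔ ((l : Fin d → ℤ) = ↑k + δp p) := by
      constructor
      · intro h; rw [h]; abel
      · intro h; rw [h]; abel
    by_cases h : (k : Fin d → ℤ) = ↑l + -δp p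
    · rw [if_pos h, if_pos (this.mp h)]
    · rw [if_neg h, if_neg (fun hh => h (this.mpr hh))]
  rw [hsymm, AC]
  show (starRingEnd ℂ) _ = _
  rw [RingHom.map_mul, map_sum]
  congr 1
  · simp
  · apply Finset.sum_congr rfl
    intro p _
    rw [RingHom.map_mul]
    congr 1
    · simp
    · by_cases h : (l : Fin d → ℤ) = ↑k + δp p <;> simp [h]


lemma eigen_gives (e n : ℕ) (q : Fin (e+1) → ℕ) (lam : ℝ) (w : ↥(Bfin e n) → ℂ) (hw : w ≠ 0)
    (heig : (AC q (Bfin e n)).mulVec w = fun k => (lam:ℂ) * w k) :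
    IsEigenvalueQn (e+1) q n lam := by
  classical
  set F := gext (Bfin e n) w with hF
  have hceq : ∀ k : ↥(Bfin e n),
      ((1 / Dq (e+1) q : ℝ) : ℂ) * ∑ p ∈ Finset.univ.offDiag, (cq q p : ℂ) * F (↑k + δp p)
        = (lam:ℂ) * F ↑k := by
    intro k
    rw [← AC_mulVec, heig]
    show (lam:ℂ) * w k = (lam:ℂ) * F ↑k
    rw [hF, gext_coe]
  obtain ⟨x, hx⟩ : ∃ x, w x ≠ 0 := Function.ne_iff.mp hw
  have hFx : F ↑x = w x := gext_coe _ _ _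
  have hxcases : (w x).re ≠ 0 ∨ (w x).im ≠ 0 := by
    by_contra hcon
    push_neg at hcon
    exact hx (Complex.ext hcon.1 hcon.2)
  obtain ⟨pr, hprx⟩ : ∃ pr : ℂ →ₗ[ℝ] ℝ, pr (F ↑x) ≠ 0 := by
    rcases hxcases with h | h
    · exact ⟨Complex.reLm, by rw [hFx]; exact h⟩
    · exact ⟨Complex.imLm, by rw [hFx]; exact h⟩
  have prmul : ∀ (a : ℝ) (z : ℂ), pr ((a:ℂ) * z) = a * pr z := by
    intro a z
    rw [← Complex.real_smul, map_smul, smul_eq_mul]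
  refine ⟨fun k => pr (F k), ?_, ?_, ?_⟩
  · apply Function.ne_iff.mpr
    exact ⟨↑x, by simpa using hprx⟩
  · intro k hk
    have : F k = 0 := by
      rw [hF, gext, dif_neg (fun hh => hk (mem_Bfin.mp hh))]
    show pr (F k) = 0
    rw [this, map_zero]
  · intro k hk
    have hkB : k ∈ Bfin e n := mem_Bfin.mpr hk
    have h := congrArg pr (hceq ⟨k, hkB⟩)
    rw [prmul, map_sum, prmul] at h
    have hterm : ∀ p : Fin (e+1) × Fin (e+1),
        pr ((cq q p : ℂ) * F (k + δp p)) = cq q p * pr (F (k + δp p)) := fun p => prmul _ _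
    rw [Finset.sum_congr rfl (fun p _ => hterm p)] at h
    have hδ : ∀ p : Fin (e+1) × Fin (e+1),
        k + Pi.single p.1 1 - Pi.single p.2 1 = k + δp p := by
      intro p; rw [δp, add_sub_assoc]
    rw [Dq] at h
    have hcongr : ∀ p ∈ Finset.univ.offDiag, Real.sqrt ((q p.1 : ℝ) * (q p.2 : ℝ)) *
        (fun k => pr (F k)) (k + Pi.single p.1 1 - Pi.single p.2 1)
        = cq q p * pr (F (k + δp p)) := by
      intro p _
      rw [cq, hδ p]
    rw [Finset.sum_congr rfl hcongr]
    exact h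


lemma exists_eigen_near (e n : ℕ) (q : Fin (e+1) → ℕ) (μ ε : ℝ) (v : ↥(Bfin e n) → ℂ)
    (hv : v ≠ 0)
    (hres : ∑ i, Complex.normSq ((AC q (Bfin e n)).mulVec v i - (μ:ℂ) * v i)
      ≤ ε^2 * ∑ i, Complex.normSq (v i)) :
    ∃ lam : ℝ, IsEigenvalueQn (e+1) q n lam ∧ (lam - μ)^2 ≤ ε^2 := by
  classical
  have hherm := AC_herm q (Bfin e n)
  obtain ⟨i, hi⟩ := approx_eigen hherm hv hres
  refine ⟨hherm.eigenvalues i, ?_, hi⟩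
  set w : ↥(Bfin e n) → ℂ := ⇑(hherm.eigenvectorBasis i) with hwdef
  apply eigen_gives e n q _ w
  · intro h0
    have : (hherm.eigenvectorBasis i : EuclideanSpace ℂ ↥(Bfin e n)) = 0 := by
      apply PiLp.ext
      intro j
      exact congrFun h0 j
    exact hherm.eigenvectorBasis.orthonormal.ne_zero i this
  · have h := hherm.mulVec_eigenvectorBasis i
    rw [hwdef]
    funext k
    rw [congrFun h k]
    simp [Pi.smul_apply, Complex.real_smul]


/-- the phase function -/
noncomputable def ph (t : Fin d → ℝ) (x : Fin d → ℤ) : ℂ :=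
  Complex.exp (((∑ j, (x j : ℝ) * t j : ℝ) : ℂ) * Complex.I)

lemma norm_ph (t : Fin d → ℝ) (x : Fin d → ℤ) : ‖ph t x‖ = 1 := by
  rw [ph, Complex.norm_exp_ofReal_mul_I]

lemma sum_single_mul (a : Fin d → ℝ) (i : Fin d) :
    ∑ j, ((Pi.single i 1 : Fin d → ℤ) j : ℝ) * a j = a i := by
  rw [Finset.sum_eq_single i]
  · simp
  · intro j _ hj
    rw [Pi.single_apply, if_neg hj]
    simp
  · intro h; exact absurd (Finset.mem_univ _) h

lemma ph_add_δp (t : Fin d → ℝ) (x : Fin d → ℤ) (p : Fin d × Fin d) :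
    ph t (x + δp p) = ph t x * Complex.exp (((t p.1 - t p.2 : ℝ) : ℂ) * Complex.I) := by
  rw [ph, ph, ← Complex.exp_add, ← add_mul, ← Complex.ofReal_add]
  congr 2
  rw [δp]
  have : ∀ j, ((((x + (Pi.single p.1 1 - Pi.single p.2 1) : Fin d → ℤ)) j : ℝ)) * t j
      = (x j : ℝ) * t j + (((Pi.single p.1 1 : Fin d → ℤ) j : ℝ) * t j
        - ((Pi.single p.2 1 : Fin d → ℤ) j : ℝ) * t j) := by
    intro j
    simp only [Pi.add_apply, Pi.sub_apply]
    push_cast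
    ring
  rw [Finset.sum_congr rfl (fun j _ => this j), Finset.sum_add_distrib,
    Finset.sum_sub_distrib, sum_single_mul, sum_single_mul]

lemma Qhat_complex (q : Fin d → ℕ) (t : Fin d → ℝ) :
    ((1 / Dq d q : ℝ) : ℂ) * ∑ p ∈ Finset.univ.offDiag,
        (cq q p : ℂ) * Complex.exp (((t p.1 - t p.2 : ℝ) : ℂ) * Complex.I)
      = ((Qhat d q t : ℝ) : ℂ) := by
  rw [sum_cq_exp, ← Complex.ofReal_mul]
  rfl






/-- the box `{1..m}^e` inside the sum-zero lattice -/
noncomputable def box (e m : ℕ) : Finset (Fin (e+1) → ℤ) :=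
  (Fintype.piFinset fun _ : Fin e => Finset.Icc (1:ℤ) m).map extEmb

/-- boundary region -/
noncomputable def bad (e m : ℕ) : Finset (Fin (e+1) → ℤ) :=
  Finset.univ.biUnion (fun i : Fin e =>
    (Fintype.piFinset fun j => if j = i then ({1, (m:ℤ), (m:ℤ)+1} : Finset ℤ)
      else Finset.Icc 1 ((m:ℤ)+1)).map extEmb)

lemma mem_box {m : ℕ} {k : Fin (e+1) → ℤ} :
    k ∈ box e m ↔ (∑ i, k i = 0 ∧ ∀ j : Fin e, 1 ≤ k (Fin.castSucc j) ∧ k (Fin.castSucc j) ≤ m) := by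
  rw [box, Finset.mem_map]
  constructor
  · rintro ⟨x, hx, rfl⟩
    rw [Fintype.mem_piFinset] at hx
    refine ⟨sum_ext x, fun j => ?_⟩
    have := hx j
    rw [Finset.mem_Icc] at this
    simpa [extEmb] using this
  · rintro ⟨hsum, hb⟩
    refine ⟨fun j => k (Fin.castSucc j), ?_, ext_proj hsum⟩
    rw [Fintype.mem_piFinset]
    intro j
    rw [Finset.mem_Icc]
    exact hb j

lemma card_box (m : ℕ) : (box e m).card = m^e := by
  rw [box, Finset.card_map, Fintype.card_piFinset]
  have : ∀ _i : Fin e, (Finset.Icc (1:ℤ) m).card = m := by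
    intro i
    rw [Int.card_Icc]
    simp
  rw [Finset.prod_congr rfl (fun i _ => this i), Finset.prod_const, Finset.card_univ]
  simp

lemma card_bad (m : ℕ) : (bad e m).card ≤ e * (3 * (m+1)^(e-1)) := by
  refine le_trans (Finset.card_biUnion_le) ?_
  have hb : ∀ i : Fin e,
      ((Fintype.piFinset fun j => if j = i then ({1, (m:ℤ), (m:ℤ)+1} : Finset ℤ)
        else Finset.Icc 1 ((m:ℤ)+1)).map extEmb).card ≤ 3 * (m+1)^(e-1) := by
    intro i
    rw [Finset.card_map, Fintype.card_piFinset]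
    rw [← Finset.mul_prod_erase Finset.univ _ (Finset.mem_univ i)]
    have h1 : (if i = i then ({1, (m:ℤ), (m:ℤ)+1} : Finset ℤ) else Finset.Icc 1 ((m:ℤ)+1)).card ≤ 3 := by
      rw [if_pos rfl]
      apply le_trans (Finset.card_insert_le _ _)
      apply Nat.succ_le_succ
      apply le_trans (Finset.card_insert_le _ _)
      simp
    have h2 : ∏ j ∈ Finset.univ.erase i,
        (if j = i then ({1, (m:ℤ), (m:ℤ)+1} : Finset ℤ) else Finset.Icc 1 ((m:ℤ)+1)).card
        = (m+1)^(e-1) := by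
      have : ∀ j ∈ Finset.univ.erase i,
          (if j = i then ({1, (m:ℤ), (m:ℤ)+1} : Finset ℤ) else Finset.Icc 1 ((m:ℤ)+1)).card
          = m+1 := by
        intro j hj
        rw [if_neg (Finset.ne_of_mem_erase hj)]
        rw [Int.card_Icc]
        omega
      rw [Finset.prod_congr rfl this, Finset.prod_const, Finset.card_erase_of_mem (Finset.mem_univ i)]
      simp
    calc _ ≤ 3 * ∏ j ∈ Finset.univ.erase i,
          (if j = i then ({1, (m:ℤ), (m:ℤ)+1} : Finset ℤ) else Finset.Icc 1 ((m:ℤ)+1)).card :=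
          Nat.mul_le_mul_right _ h1
      _ = 3 * (m+1)^(e-1) := by rw [h2]
  calc ∑ i : Fin e, ((Fintype.piFinset fun j => if j = i then ({1, (m:ℤ), (m:ℤ)+1} : Finset ℤ)
        else Finset.Icc 1 ((m:ℤ)+1)).map extEmb).card
      ≤ ∑ _i : Fin e, 3 * (m+1)^(e-1) := Finset.sum_le_sum (fun i _ => hb i)
    _ = e * (3 * (m+1)^(e-1)) := by rw [Finset.sum_const, Finset.card_univ]; simp

lemma mem_bad_of {m : ℕ} {k : Fin (e+1) → ℤ} (hsum : ∑ i, k i = 0)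
    (hub : ∀ j : Fin e, 1 ≤ k (Fin.castSucc j) ∧ k (Fin.castSucc j) ≤ m+1)
    (i : Fin e) (hAi : k (Fin.castSucc i) = 1 ∨ k (Fin.castSucc i) = m ∨ k (Fin.castSucc i) = m+1) :
    k ∈ bad e m := by
  rw [bad, Finset.mem_biUnion]
  refine ⟨i, Finset.mem_univ _, ?_⟩
  rw [Finset.mem_map]
  refine ⟨fun j => k (Fin.castSucc j), ?_, ext_proj hsum⟩
  rw [Fintype.mem_piFinset]
  intro j
  by_cases hj : j = i
  · subst hj
    rw [if_pos rfl]
    simp only [Finset.mem_insert, Finset.mem_singleton]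
    rcases hAi with h | h | h
    · exact Or.inl h
    · exact Or.inr (Or.inl h)
    · exact Or.inr (Or.inr h)
  · rw [if_neg hj, Finset.mem_Icc]
    exact hub j

lemma sum_single_int (i : Fin d) : ∑ j, (Pi.single i (1:ℤ)) j = 1 := by
  rw [Finset.sum_eq_single i]
  · simp
  · intro j _ hj; rw [Pi.single_apply, if_neg hj]
  · intro h; exact absurd (Finset.mem_univ _) h

lemma sum_δp (p : Fin d × Fin d) : ∑ i, δp p i = 0 := by
  have h : ∀ i, δp p i = (Pi.single p.1 (1:ℤ) : Fin d → ℤ) i - (Pi.single p.2 (1:ℤ) : Fin d → ℤ) i :=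
    fun i => rfl
  rw [Finset.sum_congr rfl (fun i _ => h i), Finset.sum_sub_distrib,
    sum_single_int, sum_single_int]
  ring

lemma δp_bound (p : Fin d × Fin d) (j : Fin d) : -1 ≤ δp p j ∧ δp p j ≤ 1 := by
  have : δp p j = (if j = p.1 then 1 else 0) - (if j = p.2 then 1 else 0) := by
    simp [δp, Pi.single_apply]
  rw [this]
  split_ifs <;> omega

lemma inner_bad {m : ℕ} {k : Fin (e+1) → ℤ} (hk : k ∈ box e m)
    {p : Fin (e+1) × Fin (e+1)} (hout : k + δp p ∉ box e m) : k ∈ bad e m := by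
  rw [mem_box] at hk
  obtain ⟨hsum, hb⟩ := hk
  have hsum2 : ∑ i, (k + δp p) i = 0 := by
    have h : ∀ i, (k + δp p) i = k i + δp p i := fun i => rfl
    rw [Finset.sum_congr rfl (fun i _ => h i), Finset.sum_add_distrib, hsum, sum_δp]; ring
  rw [mem_box] at hout
  push_neg at hout
  obtain ⟨j, hj⟩ := hout hsum2
  have hδ := δp_bound p (Fin.castSucc j)
  have hkj := hb j
  have happ : (k + δp p) (Fin.castSucc j) = k (Fin.castSucc j) + δp p (Fin.castSucc j) := rfl
  apply mem_bad_of hsum (fun j => ⟨(hb j).1, by have := (hb j).2; omega⟩) j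
  by_cases h1 : 1 ≤ (k + δp p) (Fin.castSucc j)
  · have := hj h1
    omega
  · omega

lemma outer_bad {m n : ℕ} {k : Fin (e+1) → ℤ} (hkB : k ∈ BnInt (e+1) n) (hk : k ∉ box e m)
    {p : Fin (e+1) × Fin (e+1)} (hin : k + δp p ∈ box e m) : k ∈ bad e m := by
  obtain ⟨hsum, hlo⟩ := hkB
  rw [mem_box] at hin
  have hk1 : ∀ j : Fin e, 1 ≤ k (Fin.castSucc j) := by
    intro j
    apply (hlo (Fin.castSucc j)).1
    simp
  have hub : ∀ j : Fin e, k (Fin.castSucc j) ≤ m + 1 := by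
    intro j
    have h1 := (hin.2 j).2
    have h2 := δp_bound p (Fin.castSucc j)
    have happ : (k + δp p) (Fin.castSucc j) = k (Fin.castSucc j) + δp p (Fin.castSucc j) := rfl
    omega
  rw [mem_box] at hk
  push_neg at hk
  obtain ⟨j, hj⟩ := hk hsum
  have : k (Fin.castSucc j) = m + 1 := by
    have h1 := hk1 j
    have h2 := hub j
    have := hj h1
    omega
  exact mem_bad_of hsum (fun j => ⟨hk1 j, hub j⟩) j (Or.inr (Or.inr this))



lemma box_subset_Bfin (e m : ℕ) {k : Fin (e+1) → ℤ} (hk : k ∈ box e m) :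
    k ∈ Bfin e (e*m+1) := by
  rw [mem_Bfin]
  rw [mem_box] at hk
  obtain ⟨hsum, hb⟩ := hk
  refine ⟨hsum, fun i => ⟨?_, ?_⟩⟩
  · intro hi
    have hi' : (i:ℕ) < e := by simpa using hi
    have h := (hb ⟨(i:ℕ), hi'⟩).1
    have : Fin.castSucc (⟨(i:ℕ), hi'⟩ : Fin e) = i := by
      apply Fin.ext; simp
    rwa [this] at h
  · intro hi
    have hi' : i = Fin.last e := by
      apply Fin.ext; simpa using hi
    subst hi'
    have hk' := ext_proj hsum
    have : k (Fin.last e) = -∑ j : Fin e, k (Fin.castSucc j) := by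
      conv_lhs => rw [← hk']
      rw [ext_last]
    rw [this]
    have hsb : ∑ j : Fin e, k (Fin.castSucc j) ≤ (e : ℤ) * m := by
      calc ∑ j : Fin e, k (Fin.castSucc j) ≤ ∑ _j : Fin e, (m:ℤ) :=
            Finset.sum_le_sum (fun j _ => (hb j).2)
        _ = (e:ℤ) * m := by rw [Finset.sum_const, Finset.card_univ]; simp
    push_cast
    omega

lemma norm_comb_le (q : Fin d → ℕ) (hD : 0 < Dq d q) {w : Fin d × Fin d → ℂ}
    (hw : ∀ p, ‖w p‖ ≤ 1) :
    ‖((1 / Dq d q : ℝ) : ℂ) * ∑ p ∈ Finset.univ.offDiag, (cq q p : ℂ) * w p‖ ≤ 1 := by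
  rw [norm_mul]
  have h1 : ‖((1 / Dq d q : ℝ) : ℂ)‖ = 1 / Dq d q := by
    rw [Complex.norm_real, Real.norm_eq_abs, abs_of_pos (by positivity)]
  rw [h1]
  have h2 : ‖∑ p ∈ Finset.univ.offDiag, (cq q p : ℂ) * w p‖ ≤ Dq d q := by
    calc ‖∑ p ∈ Finset.univ.offDiag, (cq q p : ℂ) * w p‖
        ≤ ∑ p ∈ Finset.univ.offDiag, ‖(cq q p : ℂ) * w p‖ := norm_sum_le _ _
      _ ≤ ∑ p ∈ Finset.univ.offDiag, cq q p := by
          apply Finset.sum_le_sum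
          intro p _
          rw [norm_mul, Complex.norm_real, Real.norm_eq_abs, abs_of_nonneg (cq_nonneg q p)]
          calc cq q p * ‖w p‖ ≤ cq q p * 1 :=
                mul_le_mul_of_nonneg_left (hw p) (cq_nonneg q p)
            _ = cq q p := mul_one _
      _ ≤ Dq d q := sum_cq_le q
  calc 1 / Dq d q * ‖∑ p ∈ Finset.univ.offDiag, (cq q p : ℂ) * w p‖
      ≤ 1 / Dq d q * Dq d q := by
        apply mul_le_mul_of_nonneg_left h2 (by positivity)
    _ = 1 := by field_simp

lemma approx_vector (e : ℕ) (he : 1 ≤ e) (q : Fin (e+1) → ℕ) (hq : ∀ j, 2 ≤ q j)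
    (t : Fin (e+1) → ℝ) (ε : ℝ) (m : ℕ) (hm : 1 ≤ m)
    (hmε : 3 * (e:ℝ) * ((m:ℝ)+1)^(e-1) ≤ ε^2 * (m:ℝ)^e) :
    ∃ v : ↥(Bfin e (e*m+1)) → ℂ, v ≠ 0 ∧
      ∑ i, Complex.normSq ((AC q (Bfin e (e*m+1))).mulVec v i
        - ((Qhat (e+1) q t : ℝ):ℂ) * v i)
        ≤ ε^2 * ∑ i, Complex.normSq (v i) := by
  classical
  set n := e*m+1 with hn
  set B := Bfin e n with hB
  set μ : ℝ := Qhat (e+1) q t with hμ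
  set v' : (Fin (e+1) → ℤ) → ℂ := fun x => if x ∈ box e m then ph t x else 0 with hv'
  set v : ↥B → ℂ := fun k => v' ↑k with hv
  have hD := Dq_pos (by omega) q hq
  have hgext : gext B v = v' := by
    funext x
    rw [gext]
    by_cases hx : x ∈ B
    · rw [dif_pos hx]
    · rw [dif_neg hx]
      have h2 : x ∉ box e m := fun hbox => hx (box_subset_Bfin e m hbox)
      show (0:ℂ) = if x ∈ box e m then ph t x else 0
      rw [if_neg h2]
  have hmul : ∀ k : ↥B, (AC q B).mulVec v k
      = ((1 / Dq (e+1) q : ℝ) : ℂ) * ∑ p ∈ Finset.univ.offDiag, (cq q p : ℂ) * v' (↑k + δp p) := by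
    intro k
    rw [AC_mulVec, hgext]
  have hsymb : ∀ x : Fin (e+1) → ℤ,
      ((1 / Dq (e+1) q : ℝ) : ℂ) * ∑ p ∈ Finset.univ.offDiag, (cq q p : ℂ) * ph t (x + δp p)
      = ((μ:ℝ):ℂ) * ph t x := by
    intro x
    have h1 : ∀ p ∈ Finset.univ.offDiag, (cq q p : ℂ) * ph t (x + δp p)
        = ((cq q p : ℂ) * Complex.exp (((t p.1 - t p.2 : ℝ) : ℂ) * Complex.I)) * ph t x := by
      intro p _
      rw [ph_add_δp]
      ring
    rw [Finset.sum_congr rfl h1, ← Finset.sum_mul, ← mul_assoc, Qhat_complex]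
  -- residual
  set r : ↥B → ℂ := fun k => (AC q B).mulVec v k - ((μ:ℝ):ℂ) * v k with hr
  have hr0 : ∀ k : ↥B, (↑k : Fin (e+1) → ℤ) ∉ bad e m → r k = 0 := by
    intro k hkbad
    rw [hr]
    simp only
    rw [hmul]
    by_cases hkbox : (↑k : Fin (e+1) → ℤ) ∈ box e m
    · have hnb : ∀ p : Fin (e+1) × Fin (e+1), (↑k + δp p) ∈ box e m := by
        intro p
        by_contra hcon
        exact hkbad (inner_bad hkbox hcon)
      have h2 : ∀ p ∈ Finset.univ.offDiag, (cq q p : ℂ) * v' (↑k + δp p)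
          = (cq q p : ℂ) * ph t (↑k + δp p) := by
        intro p _
        simp only [hv']
        rw [if_pos (hnb p)]
      rw [Finset.sum_congr rfl h2, hsymb]
      have : v k = ph t ↑k := by simp only [hv, hv']; rw [if_pos hkbox]
      rw [this]
      ring
    · have hnb : ∀ p : Fin (e+1) × Fin (e+1), (↑k + δp p) ∉ box e m := by
        intro p hcon
        exact hkbad (outer_bad (mem_Bfin.mp k.2) hkbox hcon)
      have h2 : ∀ p ∈ Finset.univ.offDiag, (cq q p : ℂ) * v' (↑k + δp p) = 0 := by
        intro p _
        simp only [hv']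
        rw [if_neg (hnb p)]
        ring
      rw [Finset.sum_congr rfl h2, Finset.sum_const_zero]
      have : v k = 0 := by simp only [hv, hv']; rw [if_neg hkbox]
      rw [this]
      ring
  have hr1 : ∀ k : ↥B, Complex.normSq (r k) ≤ 1 := by
    intro k
    have hnorm : ‖r k‖ ≤ 1 := by
      by_cases hkbox : (↑k : Fin (e+1) → ℤ) ∈ box e m
      · have hvk : v k = ph t ↑k := by simp only [hv, hv']; rw [if_pos hkbox]
        have hrk : r k = ((1 / Dq (e+1) q : ℝ) : ℂ) * ∑ p ∈ Finset.univ.offDiag,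
            (cq q p : ℂ) * (v' (↑k + δp p) - ph t (↑k + δp p)) := by
          rw [hr]
          simp only
          rw [hmul, hvk, ← hsymb ↑k, ← mul_sub, ← Finset.sum_sub_distrib]
          congr 1
          apply Finset.sum_congr rfl
          intro p _
          ring
        rw [hrk]
        apply norm_comb_le q hD
        intro p
        by_cases hx : (↑k + δp p) ∈ box e m
        · simp only [hv']; rw [if_pos hx, sub_self, norm_zero]; norm_num
        · simp only [hv']; rw [if_neg hx, zero_sub, norm_neg, norm_ph]
      · have hvk : v k = 0 := by simp only [hv, hv']; rw [if_neg hkbox]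
        have hrk : r k = ((1 / Dq (e+1) q : ℝ) : ℂ) * ∑ p ∈ Finset.univ.offDiag,
            (cq q p : ℂ) * v' (↑k + δp p) := by
          rw [hr]
          simp only
          rw [hmul, hvk]
          ring
        rw [hrk]
        apply norm_comb_le q hD
        intro p
        simp only [hv']
        by_cases hx : (↑k + δp p) ∈ box e m
        · rw [if_pos hx, norm_ph]
        · rw [if_neg hx, norm_zero]; norm_num
    calc Complex.normSq (r k) = ‖r k‖^2 := by
          rw [Complex.normSq_eq_norm_sq]
      _ ≤ 1 := by nlinarith [norm_nonneg (r k)]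
  -- counting
  have hsum_r : ∑ k : ↥B, Complex.normSq (r k) ≤ ((e * (3*(m+1)^(e-1)) : ℕ) : ℝ) := by
    have step1 : ∑ k : ↥B, Complex.normSq (r k)
        ≤ ∑ k : ↥B, (if (↑k : Fin (e+1) → ℤ) ∈ bad e m then (1:ℝ) else 0) := by
      apply Finset.sum_le_sum
      intro k _
      by_cases hkb : (↑k : Fin (e+1) → ℤ) ∈ bad e m
      · rw [if_pos hkb]; exact hr1 k
      · rw [if_neg hkb, hr0 k hkb]; simp
    have step2 : ∑ k : ↥B, (if (↑k : Fin (e+1) → ℤ) ∈ bad e m then (1:ℝ) else 0)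
        = ((B.filter (· ∈ bad e m)).card : ℝ) := by
      rw [Finset.sum_coe_sort B (fun x => if x ∈ bad e m then (1:ℝ) else 0)]
      rw [← Finset.sum_filter, Finset.sum_const, nsmul_eq_mul, mul_one]
    have step3 : (B.filter (· ∈ bad e m)).card ≤ e * (3*(m+1)^(e-1)) := by
      apply le_trans (Finset.card_le_card (fun x hx => (Finset.mem_filter.mp hx).2))
      exact card_bad m
    calc ∑ k : ↥B, Complex.normSq (r k) ≤ _ := step1
      _ = _ := step2
      _ ≤ _ := by exact_mod_cast step3
  have hsum_v : ∑ k : ↥B, Complex.normSq (v k) = ((m^e : ℕ) : ℝ) := by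
    have h1 : ∀ k : ↥B, Complex.normSq (v k)
        = (if (↑k : Fin (e+1) → ℤ) ∈ box e m then (1:ℝ) else 0) := by
      intro k
      simp only [hv, hv']
      by_cases hkb : (↑k : Fin (e+1) → ℤ) ∈ box e m
      · rw [if_pos hkb, if_pos hkb, Complex.normSq_eq_norm_sq, norm_ph]
        norm_num
      · rw [if_neg hkb, if_neg hkb]; simp
    rw [Finset.sum_congr rfl (fun k _ => h1 k)]
    rw [Finset.sum_coe_sort B (fun x => if x ∈ box e m then (1:ℝ) else 0)]
    rw [← Finset.sum_filter, Finset.sum_const, nsmul_eq_mul, mul_one]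
    have : B.filter (· ∈ box e m) = box e m := by
      ext x
      rw [Finset.mem_filter]
      constructor
      · rintro ⟨_, h⟩; exact h
      · intro h; exact ⟨box_subset_Bfin e m h, h⟩
    rw [this, card_box]
  -- nonzero
  set k0 : Fin (e+1) → ℤ := ext (fun _ => (1:ℤ)) with hk0
  have hk0box : k0 ∈ box e m := by
    rw [mem_box]
    refine ⟨sum_ext _, fun j => ?_⟩
    rw [hk0, ext_castSucc]
    constructor
    · norm_num
    · exact_mod_cast hm
  have hk0B : k0 ∈ B := box_subset_Bfin e m hk0box
  have hvne : v ≠ 0 := by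
    intro h0
    have : v ⟨k0, hk0B⟩ = 0 := congrFun h0 _
    simp only [hv, hv'] at this
    rw [if_pos hk0box] at this
    exact Complex.exp_ne_zero _ this
  refine ⟨v, hvne, ?_⟩
  have hfin : ∑ k : ↥B, Complex.normSq ((AC q B).mulVec v k - ((μ:ℝ):ℂ) * v k)
      = ∑ k : ↥B, Complex.normSq (r k) := by
    apply Finset.sum_congr rfl
    intro k _
    rw [hr]
  rw [hfin, hsum_v]
  calc ∑ k : ↥B, Complex.normSq (r k) ≤ ((e * (3*(m+1)^(e-1)) : ℕ) : ℝ) := hsum_r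
    _ = 3 * (e:ℝ) * ((m:ℝ)+1)^(e-1) := by push_cast; ring
    _ ≤ ε^2 * (m:ℝ)^e := hmε
    _ = ε^2 * ((m^e : ℕ) : ℝ) := by push_cast; ring


noncomputable def eθ {D : ℕ} (N : ℕ) (z : Fin D → ℤ) (a : Fin D → ℕ) : ℂ :=
  Complex.exp (((2 * π * (∑ j, (z j : ℝ) * (a j : ℝ)) / N : ℝ) : ℂ) * Complex.I)

lemma eθ_mul (N : ℕ) (z w : Fin D → ℤ) (a : Fin D → ℕ) :
    eθ N z a * eθ N w a = eθ N (z + w) a := by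
  have hsum : ∑ j, ((z + w) j : ℝ) * (a j : ℝ)
      = (∑ j, (z j : ℝ) * (a j : ℝ)) + ∑ j, (w j : ℝ) * (a j : ℝ) := by
    rw [← Finset.sum_add_distrib]
    apply Finset.sum_congr rfl
    intro j _
    have h1 : (z + w) j = z j + w j := rfl
    rw [h1]; push_cast; ring
  rw [eθ, eθ, eθ, ← Complex.exp_add, ← add_mul, ← Complex.ofReal_add]
  congr 2
  rw [← add_div, ← mul_add, ← hsum]

lemma conj_eθ (N : ℕ) (z : Fin D → ℤ) (a : Fin D → ℕ) :
    (starRingEnd ℂ) (eθ N z a) = eθ N (-z) a := by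
  rw [eθ, eθ, ← Complex.exp_conj]
  congr 1
  rw [map_mul, Complex.conj_I, Complex.conj_ofReal]
  have : ∀ j, ((-z : Fin D → ℤ) j : ℝ) * (a j : ℝ) = -((z j : ℝ) * (a j : ℝ)) := by
    intro j
    have : (-z : Fin D → ℤ) j = -(z j) := rfl
    rw [this]; push_cast; ring
  rw [Finset.sum_congr rfl (fun j _ => this j), Finset.sum_neg_distrib]
  push_cast
  ring

lemma orth1 (N : ℕ) (hN : 0 < N) (z : ℤ) :
    ∑ x ∈ Finset.range N, Complex.exp (((2*π*((z:ℝ)*(x:ℝ))/N : ℝ):ℂ) * Complex.I)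
      = if (N:ℤ) ∣ z then (N:ℂ) else 0 := by
  have hNR : (N:ℝ) ≠ 0 := by positivity
  set ζ := Complex.exp (((2*π*(z:ℝ)/N : ℝ):ℂ) * Complex.I) with hζ
  have hpow : ∀ x : ℕ, Complex.exp (((2*π*((z:ℝ)*(x:ℝ))/N : ℝ):ℂ) * Complex.I) = ζ^x := by
    intro x
    rw [hζ, ← Complex.exp_nat_mul]
    congr 1
    push_cast
    ring
  rw [Finset.sum_congr rfl (fun x _ => hpow x)]
  by_cases hdvd : (N:ℤ) ∣ z
  · obtain ⟨c, hc⟩ := hdvd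
    have hζ1 : ζ = 1 := by
      rw [hζ]
      have harg : (((2*π*(z:ℝ)/N : ℝ)):ℂ) * Complex.I = (c:ℂ) * (2 * (π:ℂ) * Complex.I) := by
        have hr : (2*π*(z:ℝ)/N : ℝ) = (c:ℝ) * (2 * π) := by
          rw [hc]; push_cast; field_simp
        rw [hr]
        push_cast
        ring
      rw [harg, Complex.exp_int_mul_two_pi_mul_I]
    rw [hζ1, if_pos (show (N:ℤ) ∣ z from ⟨c, hc⟩)]
    simp
  · have hζN : ζ^N = 1 := by
      rw [hζ, ← Complex.exp_nat_mul]
      have hr : (N:ℝ) * (2*π*(z:ℝ)/N) = (z:ℝ) * (2*π) := by field_simp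
      have harg : (N:ℂ) * ((((2*π*(z:ℝ)/N : ℝ)):ℂ) * Complex.I) = (z:ℂ) * (2 * (π:ℂ) * Complex.I) := by
        calc (N:ℂ) * ((((2*π*(z:ℝ)/N : ℝ)):ℂ) * Complex.I)
            = (((N:ℝ) * (2*π*(z:ℝ)/N) : ℝ):ℂ) * Complex.I := by push_cast; ring
          _ = (((z:ℝ) * (2*π) : ℝ):ℂ) * Complex.I := by rw [hr]
          _ = (z:ℂ) * (2 * (π:ℂ) * Complex.I) := by push_cast; ring
      rw [harg, Complex.exp_int_mul_two_pi_mul_I]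
    have hζ1 : ζ ≠ 1 := by
      intro h
      obtain ⟨c, hc⟩ := Complex.exp_eq_one_iff.mp (hζ ▸ h)
      apply hdvd
      have harg : ((2*π*(z:ℝ)/N : ℝ):ℂ) = ((2*π*(c:ℝ) : ℝ):ℂ) := by
        have hI : ((2*π*(z:ℝ)/N : ℝ):ℂ) * Complex.I = ((2*π*(c:ℝ) : ℝ):ℂ) * Complex.I := by
          rw [hc]; push_cast; ring
        exact mul_right_cancel₀ Complex.I_ne_zero hI
      have hr : (2*π*(z:ℝ)/N : ℝ) = 2*π*(c:ℝ) := by exact_mod_cast harg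
      have h2 := congrArg (fun x : ℝ => x * (N:ℝ)) hr
      rw [div_mul_cancel₀ _ hNR] at h2
      have h2π : (2*π : ℝ) ≠ 0 := by positivity
      have h3 : (z:ℝ) = (c:ℝ) * (N:ℝ) := by
        apply mul_left_cancel₀ h2π
        rw [show 2*π*((c:ℝ)*(N:ℝ)) = 2*π*(c:ℝ)*(N:ℝ) by ring]
        exact h2
      have : z = N * c := by exact_mod_cast h3.trans (mul_comm _ _)
      exact ⟨c, this⟩
    rw [geom_sum_eq hζ1, hζN]
    simp [if_neg hdvd]

lemma orthD (N : ℕ) (hN : 0 < N) (z : Fin D → ℤ) :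
    ∑ a ∈ Fintype.piFinset (fun _ : Fin D => Finset.range N), eθ N z a
      = if (∀ j, (N:ℤ) ∣ z j) then ((N:ℂ))^D else 0 := by
  have hsplit : ∀ a : Fin D → ℕ, eθ N z a
      = ∏ j, Complex.exp (((2*π*((z j:ℝ)*(a j:ℝ))/N : ℝ):ℂ) * Complex.I) := by
    intro a
    rw [eθ, ← Complex.exp_sum]
    congr 1
    have hr : (2 * π * (∑ j, (z j : ℝ) * (a j : ℝ)) / N : ℝ)
        = ∑ j, (2*π*((z j:ℝ)*(a j:ℝ))/N : ℝ) := by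
      rw [Finset.mul_sum, Finset.sum_div]
    rw [hr, Complex.ofReal_sum, Finset.sum_mul]
  rw [Finset.sum_congr rfl (fun a _ => hsplit a)]
  rw [← Finset.prod_univ_sum (fun _ : Fin D => Finset.range N)
    (fun j x => Complex.exp (((2*π*((z j:ℝ)*(x:ℝ))/N : ℝ):ℂ) * Complex.I))]
  rw [Finset.prod_congr rfl (fun j _ => orth1 N hN (z j))]
  by_cases hall : ∀ j, (N:ℤ) ∣ z j
  · rw [if_pos hall, Finset.prod_congr rfl (fun j (_ : j ∈ Finset.univ) => if_pos (hall j)),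
      Finset.prod_const, Finset.card_univ]
    simp
  · rw [if_neg hall]
    push_neg at hall
    obtain ⟨j0, hj0⟩ := hall
    apply Finset.prod_eq_zero (Finset.mem_univ j0)
    rw [if_neg hj0]


lemma eθ_zero (N : ℕ) (a : Fin D → ℕ) : eθ N (0 : Fin D → ℤ) a = 1 := by
  rw [eθ]
  have : ∑ j, (((0 : Fin D → ℤ) j : ℝ)) * (a j : ℝ) = 0 := by
    apply Finset.sum_eq_zero; intro j _
    have : ((0 : Fin D → ℤ) j) = 0 := rfl
    rw [this]; push_cast; ring
  rw [this]
  norm_num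

lemma exp_ts {D : ℕ} (N : ℕ) (a : Fin D → ℕ) (p : Fin D × Fin D) :
    Complex.exp ((((2*π*(a p.1:ℝ)/N) - (2*π*(a p.2:ℝ)/N) : ℝ):ℂ) * Complex.I)
      = eθ N (δp p) a := by
  rw [eθ]
  congr 2
  have hs : ∑ j, ((δp p) j : ℝ) * (a j:ℝ) = (a p.1:ℝ) - (a p.2:ℝ) := by
    have h1 : ∀ j, ((δp p) j : ℝ) * (a j : ℝ)
        = ((Pi.single p.1 1 : Fin D → ℤ) j : ℝ) * (a j : ℝ)
          - ((Pi.single p.2 1 : Fin D → ℤ) j : ℝ) * (a j : ℝ) := by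
      intro j
      have : (δp p) j = (Pi.single p.1 1 : Fin D → ℤ) j - (Pi.single p.2 1 : Fin D → ℤ) j := rfl
      rw [this]; push_cast; ring
    rw [Finset.sum_congr rfl (fun j _ => h1 j), Finset.sum_sub_distrib,
      sum_single_mul (fun j => (a j : ℝ)) p.1, sum_single_mul (fun j => (a j : ℝ)) p.2]
  rw [hs]
  ring

lemma eigen_convex (e n : ℕ) (q : Fin (e+1) → ℕ) (lam : ℝ)
    (hlam : IsEigenvalueQn (e+1) q n lam) :
    ∃ (A : Finset (Fin (e+1) → ℕ)) (wt : (Fin (e+1) → ℕ) → ℝ)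
      (ts : (Fin (e+1) → ℕ) → Fin (e+1) → ℝ),
      (∀ a, 0 ≤ wt a) ∧ 0 < ∑ a ∈ A, wt a ∧
      ∑ a ∈ A, wt a * Qhat (e+1) q (ts a) = lam * ∑ a ∈ A, wt a := by
  classical
  obtain ⟨f, hf0, hfsupp, hfeq⟩ := hlam
  set B := Bfin e n with hB
  have hsupp : ∀ k, k ∉ B → f k = 0 := fun k hk => hfsupp k (fun h => hk (mem_Bfin.mpr h))
  have heq : ∀ k ∈ B, (1/Dq (e+1) q) * ∑ p ∈ Finset.univ.offDiag, cq q p * f (k + δp p)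
      = lam * f k := by
    intro k hk
    have h := hfeq k (mem_Bfin.mp hk)
    rw [← h]
    rw [Dq]
    congr 1
    apply Finset.sum_congr rfl
    intro p _
    rw [cq, δp, add_sub_assoc]
  set N : ℕ := 2*n+2 with hN
  have hNpos : 0 < N := by omega
  set A := Fintype.piFinset (fun _ : Fin (e+1) => Finset.range N) with hA
  set F : (Fin (e+1) → ℕ) → ℂ := fun a => ∑ k ∈ B, (f k : ℂ) * eθ N k a with hF
  set wt : (Fin (e+1) → ℕ) → ℝ := fun a => Complex.normSq (F a) with hwt
  set ts : (Fin (e+1) → ℕ) → Fin (e+1) → ℝ := fun a j => 2*π*(a j:ℝ)/N with hts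
  -- divisibility
  have hdiv : ∀ (w : Fin (e+1) → ℤ), (∀ j, -1 ≤ w j ∧ w j ≤ 1) → ∀ k ∈ B, ∀ l ∈ B,
      ((∀ j, ((N:ℕ):ℤ) ∣ (k - l + w) j) ↔ l = k + w) := by
    intro w hw k hk l hl
    have hkb := bnint_bounds (mem_Bfin.mp hk)
    have hlb := bnint_bounds (mem_Bfin.mp hl)
    constructor
    · intro h
      funext j
      obtain ⟨c, hc⟩ := h j
      have happ : (k - l + w) j = k j - l j + w j := rfl
      rw [happ] at hc
      have hb1 := hkb j
      have hb2 := hlb j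
      have hb3 := hw j
      have hc0 : c = 0 := by
        by_contra hne
        have h1 : 1 ≤ |c| := Int.one_le_abs (by omega)
        have hNnn : (0:ℤ) ≤ (N:ℤ) := by positivity
        have h2 : (N:ℤ) ≤ (N:ℤ) * |c| := by nlinarith
        have h3 : |k j - l j + w j| = (N:ℤ) * |c| := by rw [hc, abs_mul, abs_of_nonneg hNnn]
        have h4 : |k j - l j + w j| ≤ 2*(n:ℤ)+1 := by
          rw [abs_le]
          constructor <;> omega
        rw [h3] at h4
        have hNval : (N:ℤ) = 2*(n:ℤ)+2 := by rw [hN]; push_cast; ring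
        omega
      rw [hc0, mul_zero] at hc
      have : (l : Fin (e+1) → ℤ) j + (k j - l j + w j) = l j + 0 := by rw [hc]
      show l j = (k + w) j
      have happ2 : (k + w) j = k j + w j := rfl
      rw [happ2]
      omega
    · rintro rfl
      intro j
      have : (k - (k + w) + w) j = 0 := by
        show k j - (k j + w j) + w j = 0
        ring
      rw [this]
      exact dvd_zero _
  -- the key sum identity
  have key : ∀ (w : Fin (e+1) → ℤ), (∀ j, -1 ≤ w j ∧ w j ≤ 1) →
      ∑ a ∈ A, eθ N w a * (F a * (starRingEnd ℂ) (F a))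
        = (N:ℂ)^(e+1) * ∑ k ∈ B, (f (k + w) : ℂ) * (f k : ℂ) := by
    intro w hw
    have hFconj : ∀ a, F a * (starRingEnd ℂ) (F a)
        = ∑ k ∈ B, ∑ l ∈ B, ((f k : ℂ) * (f l : ℂ)) * eθ N (k - l) a := by
      intro a
      rw [hF]
      simp only
      rw [map_sum, Finset.sum_mul_sum]
      apply Finset.sum_congr rfl
      intro k _
      apply Finset.sum_congr rfl
      intro l _
      rw [map_mul, conj_eθ]
      have : ((starRingEnd ℂ) ((f l : ℝ) : ℂ)) = ((f l : ℝ) : ℂ) := Complex.conj_ofReal _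
      rw [this]
      have : eθ N k a * eθ N (-l) a = eθ N (k - l) a := by
        rw [eθ_mul, sub_eq_add_neg]
      calc (f k : ℂ) * eθ N k a * ((f l : ℂ) * eθ N (-l) a)
          = ((f k : ℂ) * (f l : ℂ)) * (eθ N k a * eθ N (-l) a) := by ring
        _ = ((f k : ℂ) * (f l : ℂ)) * eθ N (k - l) a := by rw [this]
    have hterm : ∀ a, eθ N w a * (F a * (starRingEnd ℂ) (F a))
        = ∑ k ∈ B, ∑ l ∈ B, ((f k : ℂ) * (f l : ℂ)) * eθ N (k - l + w) a := by
      intro a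
      rw [hFconj a, Finset.mul_sum]
      apply Finset.sum_congr rfl
      intro k _
      rw [Finset.mul_sum]
      apply Finset.sum_congr rfl
      intro l _
      have : eθ N (k - l) a * eθ N w a = eθ N (k - l + w) a := eθ_mul N _ _ a
      calc eθ N w a * (((f k : ℂ) * (f l : ℂ)) * eθ N (k - l) a)
          = ((f k : ℂ) * (f l : ℂ)) * (eθ N (k - l) a * eθ N w a) := by ring
        _ = _ := by rw [this]
    rw [Finset.sum_congr rfl (fun a _ => hterm a)]
    have hswap2 : ∑ a ∈ A, ∑ k ∈ B, ∑ l ∈ B, ((f k : ℂ) * (f l : ℂ)) * eθ N (k - l + w) a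
        = ∑ k ∈ B, ∑ l ∈ B, ∑ a ∈ A, ((f k : ℂ) * (f l : ℂ)) * eθ N (k - l + w) a := by
      rw [Finset.sum_comm]
      apply Finset.sum_congr rfl
      intro k _
      rw [Finset.sum_comm]
    rw [hswap2]
    have hinner : ∀ k ∈ B, ∑ l ∈ B, ∑ a ∈ A, ((f k : ℂ) * (f l : ℂ)) * eθ N (k - l + w) a
        = (N:ℂ)^(e+1) * ((f (k + w) : ℂ) * (f k : ℂ)) := by
      intro k hk
      have hswap : ∀ l ∈ B, ∑ a ∈ A, ((f k : ℂ) * (f l : ℂ)) * eθ N (k - l + w) a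
          = ((f k : ℂ) * (f l : ℂ)) * (if (∀ j, ((N:ℕ):ℤ) ∣ (k - l + w) j) then ((N:ℂ))^(e+1) else 0) := by
        intro l _
        rw [← Finset.mul_sum, hA, orthD N hNpos]
      rw [Finset.sum_congr rfl hswap]
      have hite : ∀ l ∈ B, ((f k : ℂ) * (f l : ℂ)) *
          (if (∀ j, ((N:ℕ):ℤ) ∣ (k - l + w) j) then ((N:ℂ))^(e+1) else 0)
          = if l = k + w then ((f k : ℂ) * (f l : ℂ)) * (N:ℂ)^(e+1) else 0 := by
        intro l hl
        rw [if_congr (hdiv w hw k hk l hl) rfl rfl]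
        by_cases hcase : l = k + w
        · rw [if_pos hcase, if_pos hcase]
        · rw [if_neg hcase, if_neg hcase, mul_zero]
      rw [Finset.sum_congr rfl hite]
      rw [Finset.sum_ite_eq' B (k + w) (fun l => ((f k : ℂ) * (f l : ℂ)) * (N:ℂ)^(e+1))]
      by_cases hmem : k + w ∈ B
      · rw [if_pos hmem]; ring
      · rw [if_neg hmem, hsupp _ hmem]
        push_cast
        ring
    rw [Finset.sum_congr rfl hinner, ← Finset.mul_sum]
  -- fact 1 : denominator
  have h1 : ∑ a ∈ A, (F a * (starRingEnd ℂ) (F a)) = (N:ℂ)^(e+1) * ∑ k ∈ B, ((f k : ℂ) * (f k : ℂ)) := by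
    have h0 := key 0 (fun j => by norm_num [show (0 : Fin (e+1) → ℤ) j = 0 from rfl])
    rw [Finset.sum_congr rfl (fun a _ => by rw [eθ_zero N a, one_mul])] at h0
    rw [h0]
    congr 1
    apply Finset.sum_congr rfl
    intro k _
    rw [add_zero]
  -- fact 2 : numerator
  have h2 : ∑ a ∈ A, ((Qhat (e+1) q (ts a) : ℝ) : ℂ) * (F a * (starRingEnd ℂ) (F a))
      = (N:ℂ)^(e+1) * ((lam : ℝ) : ℂ) * ∑ k ∈ B, ((f k : ℂ) * (f k : ℂ)) := by
    have hQ : ∀ a, ((Qhat (e+1) q (ts a) : ℝ) : ℂ)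
        = ((1 / Dq (e+1) q : ℝ) : ℂ) * ∑ p ∈ Finset.univ.offDiag, (cq q p : ℂ) * eθ N (δp p) a := by
      intro a
      rw [← Qhat_complex q (ts a)]
      congr 1
      apply Finset.sum_congr rfl
      intro p _
      congr 1
      rw [← exp_ts N a p]
    have hstep : ∀ a ∈ A, ((Qhat (e+1) q (ts a) : ℝ) : ℂ) * (F a * (starRingEnd ℂ) (F a))
        = ((1 / Dq (e+1) q : ℝ) : ℂ) * ∑ p ∈ Finset.univ.offDiag,
            (cq q p : ℂ) * (eθ N (δp p) a * (F a * (starRingEnd ℂ) (F a))) := by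
      intro a _
      rw [hQ a, mul_assoc, Finset.sum_mul]
      congr 1
      apply Finset.sum_congr rfl
      intro p _
      ring
    rw [Finset.sum_congr rfl hstep, ← Finset.mul_sum, Finset.sum_comm]
    have hp : ∀ p ∈ Finset.univ.offDiag,
        ∑ a ∈ A, (cq q p : ℂ) * (eθ N (δp p) a * (F a * (starRingEnd ℂ) (F a)))
        = (cq q p : ℂ) * ((N:ℂ)^(e+1) * ∑ k ∈ B, (f (k + δp p) : ℂ) * (f k : ℂ)) := by
      intro p _
      rw [← Finset.mul_sum, key (δp p) (δp_bound p)]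
    rw [Finset.sum_congr rfl hp]
    -- now: (1/D) Σ_p c_p N^D Σ_k f(k+δ) f k = N^D lam Σ f²
    have hrearr : ∑ p ∈ Finset.univ.offDiag,
        (cq q p : ℂ) * ((N:ℂ)^(e+1) * ∑ k ∈ B, (f (k + δp p) : ℂ) * (f k : ℂ))
        = (N:ℂ)^(e+1) * ∑ k ∈ B, (∑ p ∈ Finset.univ.offDiag, (cq q p : ℂ) * (f (k + δp p) : ℂ)) * (f k : ℂ) := by
      have lhs1 : ∀ p ∈ Finset.univ.offDiag,
          (cq q p : ℂ) * ((N:ℂ)^(e+1) * ∑ k ∈ B, (f (k + δp p) : ℂ) * (f k : ℂ))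
          = ∑ k ∈ B, (N:ℂ)^(e+1) * ((cq q p : ℂ) * (f (k + δp p) : ℂ) * (f k : ℂ)) := by
        intro p _
        rw [Finset.mul_sum, Finset.mul_sum]
        apply Finset.sum_congr rfl
        intro k _
        ring
      rw [Finset.sum_congr rfl lhs1, Finset.sum_comm, Finset.mul_sum]
      apply Finset.sum_congr rfl
      intro k _
      rw [Finset.sum_mul, Finset.mul_sum]
    rw [hrearr]
    have heqC : ∀ k ∈ B, ((1/Dq (e+1) q : ℝ):ℂ) * ∑ p ∈ Finset.univ.offDiag,
        (cq q p : ℂ) * ((f (k + δp p) : ℝ) : ℂ) = ((lam:ℝ):ℂ) * ((f k:ℝ):ℂ) := by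
      intro k hk
      have hre := heq k hk
      calc ((1/Dq (e+1) q : ℝ):ℂ) * ∑ p ∈ Finset.univ.offDiag, (cq q p : ℂ) * ((f (k + δp p) : ℝ) : ℂ)
          = (((1/Dq (e+1) q) * ∑ p ∈ Finset.univ.offDiag, cq q p * f (k + δp p) : ℝ) : ℂ) := by
            push_cast
            ring
        _ = ((lam * f k : ℝ) : ℂ) := by rw [hre]
        _ = ((lam:ℝ):ℂ) * ((f k:ℝ):ℂ) := by push_cast; ring
    have hpull : ∑ k ∈ B, (((1/Dq (e+1) q : ℝ):ℂ) * ∑ p ∈ Finset.univ.offDiag,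
          (cq q p : ℂ) * ((f (k + δp p) : ℝ) : ℂ)) * ((f k:ℝ):ℂ)
        = ((lam:ℝ):ℂ) * ∑ k ∈ B, ((f k : ℂ) * (f k : ℂ)) := by
      rw [Finset.mul_sum]
      apply Finset.sum_congr rfl
      intro k hk
      rw [heqC k hk]
      ring
    have hstep2 : ((1 / Dq (e+1) q : ℝ) : ℂ) * ((N:ℂ)^(e+1) * ∑ k ∈ B,
          (∑ p ∈ Finset.univ.offDiag, (cq q p : ℂ) * ((f (k + δp p) : ℝ):ℂ)) * ((f k:ℝ):ℂ))
        = (N:ℂ)^(e+1) * ∑ k ∈ B, (((1/Dq (e+1) q : ℝ):ℂ) * ∑ p ∈ Finset.univ.offDiag,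
          (cq q p : ℂ) * ((f (k + δp p) : ℝ) : ℂ)) * ((f k:ℝ):ℂ) := by
      have hp2 : ∑ k ∈ B, (((1/Dq (e+1) q : ℝ):ℂ) * ∑ p ∈ Finset.univ.offDiag,
            (cq q p : ℂ) * ((f (k + δp p) : ℝ) : ℂ)) * ((f k:ℝ):ℂ)
          = ((1/Dq (e+1) q : ℝ):ℂ) * ∑ k ∈ B, (∑ p ∈ Finset.univ.offDiag,
            (cq q p : ℂ) * ((f (k + δp p) : ℝ) : ℂ)) * ((f k:ℝ):ℂ) := by
        rw [Finset.mul_sum]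
        apply Finset.sum_congr rfl
        intro k _
        ring
      rw [hp2]
      ring
    rw [hstep2, hpull]
    ring
  -- convert to real statements
  have hmc : ∀ a, F a * (starRingEnd ℂ) (F a) = ((wt a : ℝ) : ℂ) := by
    intro a
    rw [hwt]
    exact Complex.mul_conj (F a)
  set S : ℝ := ∑ k ∈ B, (f k)^2 with hS
  have hfkS : ∑ k ∈ B, ((f k : ℂ) * (f k : ℂ)) = ((S:ℝ):ℂ) := by
    rw [hS]
    push_cast
    apply Finset.sum_congr rfl
    intro k _
    ring
  have h1R : ∑ a ∈ A, wt a = (N:ℝ)^(e+1) * S := by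
    have hcast : ((∑ a ∈ A, wt a : ℝ):ℂ) = (((N:ℝ)^(e+1) * S : ℝ):ℂ) := by
      rw [Complex.ofReal_sum]
      calc ∑ a ∈ A, ((wt a : ℝ):ℂ) = ∑ a ∈ A, F a * (starRingEnd ℂ) (F a) :=
            Finset.sum_congr rfl (fun a _ => (hmc a).symm)
        _ = (N:ℂ)^(e+1) * ∑ k ∈ B, ((f k:ℂ) * (f k:ℂ)) := h1
        _ = (((N:ℝ)^(e+1) * S : ℝ):ℂ) := by rw [hfkS]; push_cast; ring
    exact_mod_cast hcast
  have h2R : ∑ a ∈ A, wt a * Qhat (e+1) q (ts a) = (N:ℝ)^(e+1) * lam * S := by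
    have hcast : ((∑ a ∈ A, wt a * Qhat (e+1) q (ts a) : ℝ):ℂ)
        = (((N:ℝ)^(e+1) * lam * S : ℝ):ℂ) := by
      rw [Complex.ofReal_sum]
      have hterm : ∀ a ∈ A, ((wt a * Qhat (e+1) q (ts a) : ℝ):ℂ)
          = ((Qhat (e+1) q (ts a) : ℝ):ℂ) * (F a * (starRingEnd ℂ) (F a)) := by
        intro a _
        rw [hmc a]
        push_cast
        ring
      calc ∑ a ∈ A, ((wt a * Qhat (e+1) q (ts a) : ℝ):ℂ)
          = ∑ a ∈ A, ((Qhat (e+1) q (ts a) : ℝ):ℂ) * (F a * (starRingEnd ℂ) (F a)) :=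
            Finset.sum_congr rfl hterm
        _ = (N:ℂ)^(e+1) * ((lam : ℝ) : ℂ) * ∑ k ∈ B, ((f k:ℂ) * (f k:ℂ)) := h2
        _ = (((N:ℝ)^(e+1) * lam * S : ℝ):ℂ) := by rw [hfkS]; push_cast; ring
    exact_mod_cast hcast
  have hSpos : 0 < S := by
    obtain ⟨k0, hk0⟩ := Function.ne_iff.mp hf0
    have hk0B : k0 ∈ B := by
      by_contra hcon
      exact hk0 (hsupp k0 hcon)
    rw [hS]
    apply Finset.sum_pos' (fun k _ => sq_nonneg _)
    refine ⟨k0, hk0B, ?_⟩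
    have h1 : (f k0)^2 ≠ 0 := pow_ne_zero 2 hk0
    exact lt_of_le_of_ne (sq_nonneg _) (Ne.symm h1)
  have hNRpos : (0:ℝ) < (N:ℝ)^(e+1) := by positivity
  refine ⟨A, wt, ts, fun a => Complex.normSq_nonneg _, ?_, ?_⟩
  · rw [h1R]
    positivity
  · rw [h2R, h1R]
    ring


lemma Qhat_continuous (q : Fin d → ℕ) : Continuous (Qhat d q) := by
  unfold Qhat
  apply Continuous.mul continuous_const
  apply continuous_finset_sum
  intro p _
  apply Continuous.mul continuous_const
  exact Real.continuous_cos.comp ((continuous_apply p.1).sub (continuous_apply p.2))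

lemma Qhat_periodic (q : Fin d → ℕ) (t : Fin d → ℝ) :
    ∃ s ∈ Set.Icc (0 : Fin d → ℝ) (fun _ => 2*π), Qhat d q s = Qhat d q t := by
  have h2π : (0:ℝ) < 2*π := by positivity
  refine ⟨fun j => 2*π*Int.fract (t j / (2*π)), ?_, ?_⟩
  · constructor
    · intro j
      simp only [Pi.zero_apply]
      have := Int.fract_nonneg (t j / (2*π))
      positivity
    · intro j
      simp only
      have := Int.fract_lt_one (t j / (2*π))
      nlinarith
  · unfold Qhat
    congr 1
    apply Finset.sum_congr rfl
    intro p _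
    congr 1
    have hs : ∀ j, 2*π*Int.fract (t j / (2*π)) = t j - 2*π*(⌊t j / (2*π)⌋ : ℤ) := by
      intro j
      rw [Int.fract]
      field_simp
    simp only
    rw [hs p.1, hs p.2]
    have : t p.1 - 2*π*(⌊t p.1 / (2*π)⌋ : ℤ) - (t p.2 - 2*π*(⌊t p.2 / (2*π)⌋ : ℤ))
        = (t p.1 - t p.2) - ((⌊t p.1 / (2*π)⌋ - ⌊t p.2 / (2*π)⌋ : ℤ) : ℝ) * (2*π) := by
      push_cast
      ring
    rw [this, Real.cos_sub_int_mul_two_pi]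

lemma range_Qhat_eq_Icc (q : Fin d → ℕ) :
    Set.range (Qhat d q)
      = Set.Icc (sInf (Set.range (Qhat d q))) (sSup (Set.range (Qhat d q))) := by
  have himg : Set.range (Qhat d q)
      = Qhat d q '' (Set.Icc (0 : Fin d → ℝ) (fun _ => 2*π)) := by
    apply Set.Subset.antisymm
    · rintro x ⟨t, rfl⟩
      obtain ⟨s, hs, hval⟩ := Qhat_periodic q t
      exact ⟨s, hs, hval⟩
    · rintro x ⟨t, _, rfl⟩
      exact ⟨t, rfl⟩
  have h2π : (0:ℝ) ≤ 2*π := by positivity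
  have hne : (Set.Icc (0 : Fin d → ℝ) (fun _ => 2*π)).Nonempty := by
    refine ⟨0, ?_⟩
    rw [Set.mem_Icc]
    exact ⟨le_refl _, fun j => by simpa using h2π⟩
  have hcompact : IsCompact (Set.range (Qhat d q)) := by
    rw [himg]
    exact (isCompact_Icc).image (Qhat_continuous q)
  have hconn : IsConnected (Set.range (Qhat d q)) := by
    rw [himg]
    refine ⟨hne.image _, ?_⟩
    exact ((convex_Icc _ _).isPreconnected).image _ (Qhat_continuous q).continuousOn
  exact eq_Icc_of_connected_compact hconn hcompact


end St14


/-- The closure of the union over `n ≥ 2` of the sets of eigenvalues of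
the matrices `Q_n` equals the range of `Q̂`. -/
theorem closure_eigenvalues_eq_range_Qhat (d : ℕ) (hd : 2 ≤ d) (q : Fin d → ℕ)
    (hq : ∀ j, 2 ≤ q j) :
    closure {lam : ℝ | ∃ n : ℕ, 2 ≤ n ∧ IsEigenvalueQn d q n lam} =
      Set.range (Qhat d q) := by
  obtain ⟨e, rfl⟩ : ∃ e, d = e + 1 := ⟨d - 1, by omega⟩
  have he : 1 ≤ e := by omega
  have hIcc := St14.range_Qhat_eq_Icc q
  apply Set.Subset.antisymm
  · apply closure_minimal
    · rintro lam ⟨n, hn2, hlam⟩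
      obtain ⟨A, wt, ts, hwt0, hwtpos, heqn⟩ := St14.eigen_convex e n q lam hlam
      have hbd : ∀ a ∈ A, sInf (Set.range (Qhat (e+1) q)) ≤ Qhat (e+1) q (ts a)
          ∧ Qhat (e+1) q (ts a) ≤ sSup (Set.range (Qhat (e+1) q)) := by
        intro a _
        have hmem : Qhat (e+1) q (ts a) ∈ Set.range (Qhat (e+1) q) := ⟨ts a, rfl⟩
        rw [hIcc] at hmem
        exact hmem
      have hup : lam * ∑ a ∈ A, wt a ≤ sSup (Set.range (Qhat (e+1) q)) * ∑ a ∈ A, wt a := by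
        rw [← heqn, Finset.mul_sum]
        apply Finset.sum_le_sum
        intro a ha
        calc wt a * Qhat (e+1) q (ts a) ≤ wt a * sSup (Set.range (Qhat (e+1) q)) :=
              mul_le_mul_of_nonneg_left (hbd a ha).2 (hwt0 a)
          _ = sSup (Set.range (Qhat (e+1) q)) * wt a := mul_comm _ _
      have hlow : sInf (Set.range (Qhat (e+1) q)) * ∑ a ∈ A, wt a ≤ lam * ∑ a ∈ A, wt a := by
        rw [← heqn, Finset.mul_sum]
        apply Finset.sum_le_sum
        intro a ha
        calc sInf (Set.range (Qhat (e+1) q)) * wt a = wt a * sInf (Set.range (Qhat (e+1) q)) :=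
              mul_comm _ _
          _ ≤ wt a * Qhat (e+1) q (ts a) := mul_le_mul_of_nonneg_left (hbd a ha).1 (hwt0 a)
      have hle : lam ≤ sSup (Set.range (Qhat (e+1) q)) :=
        le_of_mul_le_mul_right hup hwtpos
      have hge : sInf (Set.range (Qhat (e+1) q)) ≤ lam :=
        le_of_mul_le_mul_right hlow hwtpos
      rw [hIcc]
      exact ⟨hge, hle⟩
    · rw [hIcc]
      exact isClosed_Icc
  · rintro x ⟨t, rfl⟩
    rw [Metric.mem_closure_iff]
    intro ε hε
    set c : ℝ := 3*(e:ℝ)*2^(e-1) with hc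
    set m : ℕ := max 1 ⌈c/(ε/2)^2⌉₊ with hm
    have hm1 : 1 ≤ m := le_max_left _ _
    have hcpos : 0 < c := by rw [hc]; positivity
    have hmc : c ≤ (ε/2)^2 * m := by
      have h1 : c/(ε/2)^2 ≤ (⌈c/(ε/2)^2⌉₊ : ℝ) := Nat.le_ceil _
      have h2 : ((⌈c/(ε/2)^2⌉₊ : ℕ):ℝ) ≤ (m:ℝ) := by exact_mod_cast le_max_right 1 _
      have hε2 : (0:ℝ) < (ε/2)^2 := by positivity
      calc c = (ε/2)^2 * (c/(ε/2)^2) := by field_simp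
        _ ≤ (ε/2)^2 * m := by nlinarith
    have hmε : 3 * (e:ℝ) * ((m:ℝ)+1)^(e-1) ≤ (ε/2)^2 * (m:ℝ)^e := by
      have hm1R : (1:ℝ) ≤ (m:ℝ) := by exact_mod_cast hm1
      have hp1 : ((m:ℝ)+1)^(e-1) ≤ (2*(m:ℝ))^(e-1) := by
        apply pow_le_pow_left₀ (by linarith) (by linarith)
      have hsplit : (2*(m:ℝ))^(e-1) = 2^(e-1) * (m:ℝ)^(e-1) := mul_pow _ _ _
      have hme : (m:ℝ)^e = (m:ℝ)^(e-1) * (m:ℝ) := by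
        rw [← pow_succ]
        congr 1
        omega
      have hpos : (0:ℝ) < (m:ℝ)^(e-1) := by positivity
      calc 3*(e:ℝ)*((m:ℝ)+1)^(e-1) ≤ 3*(e:ℝ)*(2^(e-1) * (m:ℝ)^(e-1)) := by
            rw [← hsplit]
            apply mul_le_mul_of_nonneg_left hp1 (by positivity)
        _ = c * (m:ℝ)^(e-1) := by rw [hc]; ring
        _ ≤ ((ε/2)^2 * m) * (m:ℝ)^(e-1) := mul_le_mul_of_nonneg_right hmc (le_of_lt hpos)
        _ = (ε/2)^2 * (m:ℝ)^e := by rw [hme]; ring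
    obtain ⟨v, hv0, hres⟩ := St14.approx_vector e he q hq t (ε/2) m hm1 hmε
    obtain ⟨lam, hlam, hsq⟩ := St14.exists_eigen_near e (e*m+1) q (Qhat (e+1) q t) (ε/2) v hv0 hres
    have hn2 : 2 ≤ e*m+1 := by
      have := Nat.mul_le_mul he hm1
      omega
    refine ⟨lam, ⟨e*m+1, hn2, hlam⟩, ?_⟩
    rw [Real.dist_eq]
    have h2 : (lam - Qhat (e+1) q t)^2 < ε^2 := by nlinarith
    rw [abs_sub_comm, abs_lt]
    constructor
    · nlinarith [sq_nonneg (lam - Qhat (e+1) q t + ε)]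
    · nlinarith [sq_nonneg (lam - Qhat (e+1) q t - ε)]
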